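/- (Map duality, part (ii).) Let (V, D) and (W, E) be EReal-extended L-convex sets, with induced distances d_D v v' := ⨆_{p ∈ D} (p v' - p v) on V and d_E w w' := ⨆_{q ∈ E} (q w' - q w) on W. Then a function φ : W → V defines a homomorphism from (V, D) to (W, E) (i.e. p ∘ φ ∈ E for every p ∈ D) if and only if φ is nonexpansive from (W, d_E) to (V, d_D), i.e. d_D (φ w) (φ w') ≤ d_E w w' for all w, w' ∈ W. -/

import Mathlib

noncomputable def oplus (x y : EReal) : EReal := -((-x) + (-y))

noncomputable def distD {V : Type*} (D : Set (V → EReal)) (v w : V) : EReal :=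
  ⨆ p ∈ D, (p w - p v)

lemma oplus_comm (x y : EReal) : oplus x y = oplus y x := by simp [oplus, add_comm]
lemma oplus_top (x : EReal) : oplus x ⊤ = ⊤ := by simp [oplus]
lemma top_oplus (x : EReal) : oplus ⊤ x = ⊤ := by simp [oplus]
lemma oplus_zero (x : EReal) : oplus x 0 = x := by simp [oplus]
lemma oplus_coe (x : EReal) (a : ℝ) : oplus x (a : EReal) = x + a := by
  induction x using EReal.rec with
  | bot => simp [oplus, ← EReal.coe_neg]
  | coe y => simp [oplus, ← EReal.coe_neg, ← EReal.coe_add]; ring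
  | top => simp [oplus, ← EReal.coe_neg]

lemma oplus_le_oplus_left (x : EReal) {y z : EReal} (h : y ≤ z) :
    oplus x y ≤ oplus x z := by
  simp only [oplus, EReal.neg_le_neg_iff]
  exact add_le_add (le_refl _) (EReal.neg_le_neg_iff.2 h)

set_option linter.unusedSectionVars false

lemma le_oplus_of_sub_le {x y d : EReal} (h : x - y ≤ d) : x ≤ oplus y d := by
  induction y using EReal.rec with
  | top => rw [top_oplus]; exact le_top
  | bot =>
    induction d using EReal.rec with
    | top => rw [oplus_top]; exact le_top
    | bot =>
      induction x using EReal.rec with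
      | bot => exact bot_le
      | coe a => simp [sub_eq_add_neg] at h
      | top => simp [sub_eq_add_neg] at h
    | coe d' =>
      induction x using EReal.rec with
      | bot => exact bot_le
      | coe a => simp [sub_eq_add_neg] at h
      | top => simp [sub_eq_add_neg] at h
  | coe y' =>
    induction d using EReal.rec with
    | top => rw [oplus_top]; exact le_top
    | bot =>
      induction x using EReal.rec with
      | bot => exact bot_le
      | coe a => simp [← EReal.coe_sub] at h
      | top => simp [sub_eq_add_neg, ← EReal.coe_neg] at h
    | coe d' =>
      rw [oplus_coe]
      induction x using EReal.rec with
      | bot => exact bot_le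
      | coe a =>
        rw [show ((y':EReal) + d') = ((y' + d' : ℝ) : EReal) by norm_cast]
        rw [show ((a:EReal) - y') = ((a - y' : ℝ) : EReal) by norm_cast] at h
        rw [EReal.coe_le_coe_iff] at h ⊢
        linarith
      | top =>
        rw [show ((⊤:EReal) - y') = (⊤ : EReal) by
          rw [sub_eq_add_neg, ← EReal.coe_neg]; exact EReal.top_add_coe _] at h
        simp at h

lemma ereal_cases (x : EReal) : x = ⊥ ∨ (∃ a : ℝ, x = (a : EReal)) ∨ x = ⊤ := by
  induction x using EReal.rec with
  | bot => exact Or.inl rfl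
  | coe a => exact Or.inr (Or.inl ⟨a, rfl⟩)
  | top => exact Or.inr (Or.inr rfl)

lemma sub_coe_eq_oplus (x : EReal) (a : ℝ) : x - (a : EReal) = oplus x ((-a : ℝ) : EReal) := by
  rw [oplus_coe, sub_eq_add_neg, ← EReal.coe_neg]

lemma distD_self_le_zero {W : Type*} (E : Set (W → EReal)) (w : W) : distD E w w ≤ 0 := by
  apply iSup₂_le
  intro r _
  rcases ereal_cases (r w) with h | ⟨a, h⟩ | h
  · rw [h, sub_eq_add_neg, EReal.bot_add]; exact bot_le
  · rw [h, ← EReal.coe_sub, sub_self]; exact le_of_eq EReal.coe_zero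
  · rw [h, sub_eq_add_neg, EReal.neg_top, EReal.add_bot]; exact bot_le

lemma sub_le_distD {W : Type*} (E : Set (W → EReal)) {r : W → EReal} (hr : r ∈ E)
    (w₀ w : W) : r w - r w₀ ≤ distD E w₀ w :=
  le_iSup₂ (f := fun (q : W → EReal) (_ : q ∈ E) => q w - q w₀) r hr

def Uset {W : Type*} (E : Set (W → EReal)) (w₀ : W) : Set (W → EReal) :=
  {g | ∃ r ∈ E, (∃ x : ℝ, r w₀ = (x : EReal)) ∧ g = fun w => oplus (r w) (-(r w₀))}

noncomputable def uFun {W : Type*} (E : Set (W → EReal)) (w₀ : W) : W → EReal :=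
  fun w => ⨆ g ∈ Uset E w₀, g w

def Sset {W : Type*} (E : Set (W → EReal)) (q0 : W → EReal) (w₀ : W) : Set (W → EReal) :=
  insert (fun w => oplus (uFun E w₀ w) (q0 w₀))
    {g | ∃ r ∈ E, r w₀ = ⊥ ∧ ∃ α : ℝ, g = fun w => oplus (r w) ((α : ℝ) : EReal)}

noncomputable def gFun {W : Type*} (E : Set (W → EReal)) (q0 : W → EReal) (w₀ : W) :
    W → EReal := fun w => ⨆ g ∈ Sset E q0 w₀, g w

section master
variable {W : Type*} (E : Set (W → EReal))
  (hOrdE : ∀ S ⊆ E, (fun w => ⨆ q ∈ S, q w) ∈ E ∧ (fun w => ⨅ q ∈ S, q w) ∈ E)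
  (hWtE : ∀ q ∈ E, ∀ α : EReal, (fun w => oplus (q w) α) ∈ E)

include hOrdE hWtE

lemma uFun_mem (w₀ : W) : uFun E w₀ ∈ E := by
  apply (hOrdE _ ?_).1
  rintro g ⟨r, hr, -, rfl⟩
  exact hWtE r hr _

lemma uFun_le (w₀ w : W) : uFun E w₀ w ≤ distD E w₀ w := by
  apply iSup₂_le
  rintro g ⟨r, hr, ⟨x, hx⟩, rfl⟩
  have h := sub_le_distD E hr w₀ w
  rw [hx, sub_eq_add_neg, ← EReal.coe_neg] at h
  show oplus (r w) (-(r w₀)) ≤ _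
  rwa [hx, ← EReal.coe_neg, oplus_coe]

lemma Sset_sub (q0 : W → EReal) (w₀ : W) : Sset E q0 w₀ ⊆ E := by
  rintro g (rfl | ⟨r, hr, -, α, rfl⟩)
  · exact hWtE _ (uFun_mem E hOrdE hWtE w₀) _
  · exact hWtE r hr _

lemma gFun_mem (q0 : W → EReal) (w₀ : W) : gFun E q0 w₀ ∈ E :=
  (hOrdE _ (Sset_sub E hOrdE hWtE q0 w₀)).1

lemma gFun_le (q0 : W → EReal) (w₀ w : W) :
    gFun E q0 w₀ w ≤ oplus (q0 w₀) (distD E w₀ w) := by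
  apply iSup₂_le
  rintro g (rfl | ⟨r, hr, hb, α, rfl⟩)
  · show oplus (uFun E w₀ w) (q0 w₀) ≤ _
    rw [oplus_comm]
    exact oplus_le_oplus_left _ (uFun_le E hOrdE hWtE w₀ w)
  · show oplus (r w) ((α : ℝ) : EReal) ≤ _
    by_cases hrw : r w = ⊥
    · rw [hrw, oplus_coe, EReal.bot_add]; exact bot_le
    · have hd : distD E w₀ w = ⊤ := by
        apply le_antisymm le_top
        have h := sub_le_distD E hr w₀ w
        rwa [hb, sub_eq_add_neg, EReal.neg_bot, EReal.add_top_of_ne_bot hrw] at h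
      rw [hd, oplus_top]; exact le_top

lemma gFun_ge (q0 : W → EReal)
    (hq : ∀ w₀ w, q0 w ≤ oplus (q0 w₀) (distD E w₀ w)) (w₀ w : W) :
    q0 w ≤ gFun E q0 w₀ w := by
  by_cases hbad : ∃ r ∈ E, r w₀ = ⊥ ∧ r w ≠ ⊥
  · obtain ⟨r, hr, hb, hn⟩ := hbad
    have htop : gFun E q0 w₀ w = ⊤ := by
      rcases ereal_cases (r w) with h | ⟨a, h⟩ | h
      · exact absurd h hn
      · rw [EReal.eq_top_iff_forall_lt]
        intro y
        have hmem : (fun w => oplus (r w) (((y - a + 1 : ℝ) : ℝ) : EReal)) ∈ Sset E q0 w₀ :=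
          Set.mem_insert_iff.2 (Or.inr ⟨r, hr, hb, y - a + 1, rfl⟩)
        have hle : oplus (r w) (((y - a + 1 : ℝ) : ℝ) : EReal) ≤ gFun E q0 w₀ w :=
          le_iSup₂ (f := fun (g : W → EReal) (_ : g ∈ Sset E q0 w₀) => g w) _ hmem
        rw [h, oplus_coe, ← EReal.coe_add] at hle
        calc (y : EReal) < ((a + (y - a + 1) : ℝ) : EReal) := by
              rw [EReal.coe_lt_coe_iff]; linarith
          _ ≤ _ := hle
      · apply le_antisymm le_top
        have hmem : (fun w => oplus (r w) (((0 : ℝ) : ℝ) : EReal)) ∈ Sset E q0 w₀ :=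
          Set.mem_insert_iff.2 (Or.inr ⟨r, hr, hb, 0, rfl⟩)
        have hle : oplus (r w) (((0 : ℝ) : ℝ) : EReal) ≤ gFun E q0 w₀ w :=
          le_iSup₂ (f := fun (g : W → EReal) (_ : g ∈ Sset E q0 w₀) => g w) _ hmem
        rwa [h, top_oplus] at hle
    rw [htop]; exact le_top
  · push_neg at hbad
    have hd : distD E w₀ w ≤ uFun E w₀ w := by
      apply iSup₂_le
      intro r hr
      rcases ereal_cases (r w₀) with h | ⟨a, h⟩ | h
      · rw [hbad r hr h, h, sub_eq_add_neg, EReal.bot_add]; exact bot_le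
      · have hmem : (fun w => oplus (r w) (-(r w₀))) ∈ Uset E w₀ := ⟨r, hr, ⟨a, h⟩, rfl⟩
        have hle : oplus (r w) (-(r w₀)) ≤ uFun E w₀ w :=
          le_iSup₂ (f := fun (g : W → EReal) (_ : g ∈ Uset E w₀) => g w) _ hmem
        rw [h, ← EReal.coe_neg, oplus_coe] at hle
        rw [h, sub_eq_add_neg, ← EReal.coe_neg]
        exact hle
      · rw [h, EReal.sub_top]; exact bot_le
    calc q0 w ≤ oplus (q0 w₀) (distD E w₀ w) := hq w₀ w
      _ ≤ oplus (q0 w₀) (uFun E w₀ w) := oplus_le_oplus_left _ hd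
      _ = oplus (uFun E w₀ w) (q0 w₀) := oplus_comm _ _
      _ ≤ gFun E q0 w₀ w :=
          le_iSup₂ (f := fun (g : W → EReal) (_ : g ∈ Sset E q0 w₀) => g w) _
            (Set.mem_insert _ _)

lemma mem_of_lipschitz (q0 : W → EReal)
    (hq : ∀ w₀ w, q0 w ≤ oplus (q0 w₀) (distD E w₀ w)) : q0 ∈ E := by
  have hT : Set.range (gFun E q0) ⊆ E := by
    rintro g ⟨w₀, rfl⟩
    exact gFun_mem E hOrdE hWtE q0 w₀
  have hmem := (hOrdE _ hT).2
  have heq : q0 = fun w => ⨅ g ∈ Set.range (gFun E q0), g w := by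
    funext w
    apply le_antisymm
    · apply le_iInf₂
      rintro g ⟨w₀, rfl⟩
      exact gFun_ge E hOrdE hWtE q0 hq w₀ w
    · calc (⨅ g ∈ Set.range (gFun E q0), g w) ≤ gFun E q0 w w :=
            iInf₂_le (f := fun (g : W → EReal) (_ : g ∈ Set.range (gFun E q0)) => g w) _
              ⟨w, rfl⟩
        _ ≤ oplus (q0 w) (distD E w w) := gFun_le E hOrdE hWtE q0 w w
        _ ≤ oplus (q0 w) 0 := oplus_le_oplus_left _ (distD_self_le_zero E w)
        _ = q0 w := oplus_zero _
  rw [heq]; exact hmem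

end master

theorem map_duality_lconvex {V W : Type*} (D : Set (V → EReal)) (E : Set (W → EReal))
    (hOrdD : ∀ S ⊆ D, (fun v => ⨆ p ∈ S, p v) ∈ D ∧ (fun v => ⨅ p ∈ S, p v) ∈ D)
    (hWtD : ∀ p ∈ D, ∀ α : EReal, (fun v => oplus (p v) α) ∈ D)
    (hOrdE : ∀ S ⊆ E, (fun w => ⨆ q ∈ S, q w) ∈ E ∧ (fun w => ⨅ q ∈ S, q w) ∈ E)
    (hWtE : ∀ q ∈ E, ∀ α : EReal, (fun w => oplus (q w) α) ∈ E)
    (φ : W → V) :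
    (∀ p ∈ D, (p ∘ φ) ∈ E) ↔
    (∀ w w', distD D (φ w) (φ w') ≤ distD E w w') := by
  constructor
  · intro h w w'
    apply iSup₂_le
    intro p hp
    exact le_iSup₂ (f := fun (q : W → EReal) (_ : q ∈ E) => q w' - q w) (p ∘ φ) (h p hp)
  · intro hφ p hp
    apply mem_of_lipschitz E hOrdE hWtE
    intro w₀ w
    apply le_oplus_of_sub_le
    calc (p ∘ φ) w - (p ∘ φ) w₀ ≤ distD D (φ w₀) (φ w) := sub_le_distD D hp (φ w₀) (φ w)
      _ ≤ distD E w₀ w := hφ w₀ w
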